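/- Let 𝔤 be a real semisimple Lie algebra with Killing form K, A a K-symmetric isomorphism of 𝔤 defining a metric via B(x,y) = K(x,Ay), and F(x) = [x, A⁻¹x] the Euler field. If u is a GCS of F with ratio r ≠ 1 (u(s) = r u(0), r > 0), then K(u(t), A⁻¹u(t)) = 0 for all t, and u(t) is nilpotent (ad_{u(t)} is a nilpotent operator) for all t. -/

import Mathlib

open Finset Matrix in
lemma aux_vandermonde {m : ℕ} (v : Fin m → ℂ) (hv : Function.Injective v)
    (h0 : ∀ j, v j ≠ 0) (d : Fin m → ℂ)
    (hsum : ∀ k : ℕ, k ≠ 0 → ∑ j, d j * v j ^ k = 0) : ∀ j, d j = 0 := by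
  let W : Matrix (Fin m) (Fin m) ℂ := Matrix.of fun k j => v j ^ ((k : ℕ) + 1)
  have hW : W = (Matrix.vandermonde v)ᵀ * Matrix.diagonal v := by
    ext k j
    simp [W, Matrix.mul_diagonal, Matrix.vandermonde, pow_succ]
  have hdet : W.det ≠ 0 := by
    rw [hW, Matrix.det_mul, Matrix.det_transpose, Matrix.det_vandermonde, Matrix.det_diagonal]
    refine mul_ne_zero (Finset.prod_ne_zero_iff.mpr fun i _ => Finset.prod_ne_zero_iff.mpr
      fun j hj => sub_ne_zero.mpr fun hij => ?_) (Finset.prod_ne_zero_iff.mpr fun j _ => h0 j)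
    exact absurd (hv hij) (ne_of_gt (Finset.mem_Ioi.mp hj))
  have hmv : W.mulVec d = 0 := by
    funext k
    have hk := hsum ((k : ℕ) + 1) (Nat.succ_ne_zero _)
    calc W.mulVec d k = ∑ j, v j ^ ((k : ℕ) + 1) * d j := by
          simp [Matrix.mulVec, dotProduct, W]
      _ = ∑ j, d j * v j ^ ((k : ℕ) + 1) := by
          exact Finset.sum_congr rfl fun j _ => by ring
      _ = 0 := hk
  have hd : d = 0 := by
    have hu : IsUnit W.det := Ne.isUnit hdet
    calc d = (1 : Matrix (Fin m) (Fin m) ℂ).mulVec d := (Matrix.one_mulVec d).symm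
      _ = (W⁻¹ * W).mulVec d := by rw [Matrix.nonsing_inv_mul W hu]
      _ = W⁻¹.mulVec (W.mulVec d) := (Matrix.mulVec_mulVec d W⁻¹ W).symm
      _ = 0 := by rw [hmv, Matrix.mulVec_zero]
  intro j; rw [hd]; rfl




open Module LinearMap in
lemma aux_nilpotent_complex {V : Type*} [AddCommGroup V] [Module ℂ V]
    [FiniteDimensional ℂ V] (f : Module.End ℂ V)
    (h : ∀ k : ℕ, k ≠ 0 → LinearMap.trace ℂ V (f ^ k) = 0) : IsNilpotent f := by
  classical
  have hds := DirectSum.isInternal_submodule_of_iSupIndep_of_iSup_eq_top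
    f.independent_maxGenEigenspace (Module.End.iSup_maxGenEigenspace_eq_top f)
  have hfin : {μ : ℂ | f.maxGenEigenspace μ ≠ ⊥}.Finite :=
    WellFoundedGT.finite_ne_bot_of_iSupIndep f.independent_maxGenEigenspace
  have hmapf : ∀ μ : ℂ, Set.MapsTo f (f.maxGenEigenspace μ) (f.maxGenEigenspace μ) :=
    fun μ => Module.End.mapsTo_maxGenEigenspace_of_comm rfl μ
  have hmap : ∀ (k : ℕ) (μ : ℂ),
      Set.MapsTo (f ^ k) (f.maxGenEigenspace μ) (f.maxGenEigenspace μ) :=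
    fun k μ => Module.End.mapsTo_maxGenEigenspace_of_comm (Commute.pow_right rfl k) μ
  -- trace of the restriction of `f ^ k` to a generalized eigenspace
  have hblock : ∀ (μ : ℂ) (k : ℕ),
      LinearMap.trace ℂ _ ((f ^ k).restrict (hmap k μ)) =
        μ ^ k * (finrank ℂ (f.maxGenEigenspace μ) : ℂ) := by
    intro μ k
    have hpr : ∀ k : ℕ, (f.restrict (hmapf μ)) ^ k = (f ^ k).restrict (hmap k μ) := by
      intro k; exact Module.End.pow_restrict k (hmapf μ)
    rw [← hpr]
    induction k with
    | zero => simp [LinearMap.trace_id]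
    | succ k ih =>
        have hnil : IsNilpotent
            ((f.restrict (hmapf μ)) - algebraMap ℂ (Module.End ℂ (f.maxGenEigenspace μ)) μ) := by
          have := f.isNilpotent_restrict_maxGenEigenspace_sub_algebraMap μ
          have heq : (f - algebraMap ℂ (Module.End ℂ V) μ).restrict
              (Module.End.mapsTo_maxGenEigenspace_of_comm
                (Algebra.mul_sub_algebraMap_commutes f μ) μ) =
              (f.restrict (hmapf μ)) - algebraMap ℂ (Module.End ℂ (f.maxGenEigenspace μ)) μ := by
            ext x; simp [LinearMap.restrict_apply, Module.algebraMap_end_apply]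
            rfl
          rwa [heq] at this
        have hcomm : Commute ((f.restrict (hmapf μ)) ^ k) (f.restrict (hmapf μ)) :=
          (Commute.refl _).pow_left k
        calc LinearMap.trace ℂ _ ((f.restrict (hmapf μ)) ^ (k + 1))
            = LinearMap.trace ℂ _ (((f.restrict (hmapf μ)) ^ k) ∘ₗ (f.restrict (hmapf μ))) := by
              rw [pow_succ]; rfl
          _ = μ * LinearMap.trace ℂ _ ((f.restrict (hmapf μ)) ^ k) :=
              LinearMap.trace_comp_eq_mul_of_commute_of_isNilpotent μ hcomm hnil
          _ = μ ^ (k + 1) * (finrank ℂ (f.maxGenEigenspace μ) : ℂ) := by rw [ih]; ring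
  have hsum : ∀ k : ℕ, k ≠ 0 →
      ∑ μ ∈ hfin.toFinset, μ ^ k * (finrank ℂ (f.maxGenEigenspace μ) : ℂ) = 0 := by
    intro k hk
    rw [← h k hk, LinearMap.trace_eq_sum_trace_restrict' hds hfin (hmap k)]
    exact Finset.sum_congr rfl fun μ _ => (hblock μ k).symm
  -- all nonzero potential eigenvalues have trivial generalized eigenspace
  have hzero : ∀ μ : ℂ, f.maxGenEigenspace μ ≠ ⊥ → μ = 0 := by
    intro μ hμ
    by_contra hμ0
    set T : Finset ℂ := hfin.toFinset.filter (fun x => x ≠ 0) with hT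
    have hμT : μ ∈ T := by
      simp [hT, Set.Finite.mem_toFinset, hμ, hμ0]
    set m := T.card with hm
    have e : Fin m ≃ {x // x ∈ T} := (T.equivFin).symm
    set v : Fin m → ℂ := fun j => (e j : ℂ) with hv
    have hvinj : Function.Injective v := fun a b hab => by
      have := Subtype.ext hab
      exact e.injective this
    have hv0 : ∀ j, v j ≠ 0 := fun j => (Finset.mem_filter.mp (e j).2).2
    set d : Fin m → ℂ := fun j => (finrank ℂ (f.maxGenEigenspace (v j)) : ℂ) with hd
    have hsum' : ∀ k : ℕ, k ≠ 0 → ∑ j, d j * v j ^ k = 0 := by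
      intro k hk
      have h1 : ∑ j, d j * v j ^ k = ∑ μ ∈ T, μ ^ k * (finrank ℂ (f.maxGenEigenspace μ) : ℂ) := by
        calc ∑ j, d j * v j ^ k
            = ∑ j, (fun x : {x // x ∈ T} =>
                (x : ℂ) ^ k * (finrank ℂ (f.maxGenEigenspace (x : ℂ)) : ℂ)) (e j) :=
              Finset.sum_congr rfl fun j _ => by simp only [hd, hv]; ring
          _ = ∑ x : {x // x ∈ T},
                (x : ℂ) ^ k * (finrank ℂ (f.maxGenEigenspace (x : ℂ)) : ℂ) := Equiv.sum_comp e (fun x : {x // x ∈ T} => (x : ℂ) ^ k * (finrank ℂ (f.maxGenEigenspace (x : ℂ)) : ℂ))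
          _ = ∑ μ ∈ T, μ ^ k * (finrank ℂ (f.maxGenEigenspace μ) : ℂ) := Finset.sum_coe_sort T (fun μ => μ ^ k * (finrank ℂ (f.maxGenEigenspace μ) : ℂ))
      rw [h1, Finset.sum_filter_of_ne, hsum k hk]
      intro x hx hne
      intro hx0
      apply hne
      rw [hx0, zero_pow hk, zero_mul]
    have := aux_vandermonde v hvinj hv0 d hsum'
    have hj := this (e.symm ⟨μ, hμT⟩)
    rw [hd] at hj
    have hj' : ((finrank ℂ (f.maxGenEigenspace (v (e.symm ⟨μ, hμT⟩)))) : ℂ) = 0 := hj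
    have : finrank ℂ (f.maxGenEigenspace (v (e.symm ⟨μ, hμT⟩))) = 0 := Nat.cast_eq_zero.mp hj'
    have hvμ : v (e.symm ⟨μ, hμT⟩) = μ := by simp [hv]
    rw [hvμ] at this
    exact hμ (Submodule.finrank_eq_zero.mp this)
  -- hence the generalized 0-eigenspace is everything
  have htop : f.maxGenEigenspace 0 = ⊤ := by
    refine le_antisymm le_top ?_
    rw [← Module.End.iSup_maxGenEigenspace_eq_top f]
    refine iSup_le fun μ => ?_
    rcases eq_or_ne (f.maxGenEigenspace μ) ⊥ with hb | hb
    · rw [hb]; exact bot_le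
    · rw [hzero μ hb]
  have hall : ∀ x : V, ∃ n : ℕ, (f ^ n) x = 0 := by
    intro x
    have hx : x ∈ f.maxGenEigenspace 0 := htop ▸ Submodule.mem_top
    rw [Module.End.mem_maxGenEigenspace] at hx
    obtain ⟨k, hk⟩ := hx
    exact ⟨k, by simpa using hk⟩
  exact ((LinearMap.charpoly_nilpotent_tfae f).out 2 0).mp hall




lemma aux_nilpotent_real_matrix {n : Type*} [Fintype n] [DecidableEq n]
    (M : Matrix n n ℝ) (h : ∀ k : ℕ, k ≠ 0 → (M ^ k).trace = 0) : IsNilpotent M := by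
  classical
  set φ : Matrix n n ℝ →+* Matrix n n ℂ := (algebraMap ℝ ℂ).mapMatrix with hφ
  set Mc : Matrix n n ℂ := φ M with hMc
  have htrc : ∀ k : ℕ, k ≠ 0 → (Mc ^ k).trace = 0 := by
    intro k hk
    have h1 : Mc ^ k = φ (M ^ k) := (map_pow φ M k).symm
    have h2 : (φ (M ^ k)).trace = algebraMap ℝ ℂ ((M ^ k).trace) := by
      simp [hφ, Matrix.trace, Matrix.diag, RingHom.mapMatrix_apply, Matrix.map_apply, map_sum]
    rw [h1, h2, h k hk, map_zero]
  -- pass to the endomorphism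
  set ψ : Module.End ℂ (n → ℂ) := Matrix.toLinAlgEquiv' Mc with hψ
  have hψtr : ∀ k : ℕ, k ≠ 0 → LinearMap.trace ℂ (n → ℂ) (ψ ^ k) = 0 := by
    intro k hk
    have h1 : ψ ^ k = Matrix.toLinAlgEquiv' (Mc ^ k) := (map_pow (Matrix.toLinAlgEquiv') Mc k).symm
    have h4 : LinearMap.toMatrix (Pi.basisFun ℂ n) (Pi.basisFun ℂ n)
        (Matrix.toLinAlgEquiv' (Mc ^ k)) = Mc ^ k := by
      rw [LinearMap.toMatrix_eq_toMatrix']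
      exact LinearMap.toMatrix'_toLin' (Mc ^ k)
    rw [h1, LinearMap.trace_eq_matrix_trace ℂ (Pi.basisFun ℂ n), h4]
    exact htrc k hk
  have hψnil : IsNilpotent ψ := aux_nilpotent_complex ψ hψtr
  have hMcnil : IsNilpotent Mc := by
    have := hψnil.map (Matrix.toLinAlgEquiv' (R := ℂ) (n := n)).symm
    simpa [hψ] using this
  obtain ⟨j, hj⟩ := hMcnil
  refine ⟨j, ?_⟩
  have hj' : φ (M ^ j) = 0 := by rw [map_pow]; exact hj
  ext i i'
  have h2 : (algebraMap ℝ ℂ) ((M ^ j) i i') = 0 := by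
    have h3 := congrFun (congrFun hj' i) i'
    simpa [hφ, RingHom.mapMatrix_apply, Matrix.map_apply] using h3
  rw [Complex.coe_algebraMap] at h2
  simpa using Complex.ofReal_eq_zero.mp h2




attribute [local instance] Matrix.linftyOpNormedAddCommGroup Matrix.linftyOpNormedSpace
  Matrix.linftyOpNormedRing Matrix.linftyOpNormedAlgebra

open Finset in
lemma aux_S_trace {ι : Type*} [Fintype ι] [DecidableEq ι] (X Y : Matrix ι ι ℝ) (k : ℕ) :
    (∑ i ∈ Finset.range k, X ^ i * (X * Y - Y * X) * X ^ (k - 1 - i)).trace = 0 := by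
  rw [Matrix.trace_sum]
  refine Finset.sum_eq_zero fun i hi => ?_
  have hik : i < k := Finset.mem_range.mp hi
  have hle : (k - 1 - i) + i = k - 1 := by omega
  have h1 : (X ^ i * (X * Y - Y * X) * X ^ (k - 1 - i)).trace
      = (X ^ (k - 1) * (X * Y - Y * X)).trace := by
    rw [Matrix.trace_mul_comm, ← mul_assoc, ← pow_add, hle]
  have h2 : (X ^ (k - 1) * (Y * X)).trace = (X ^ (k - 1) * (X * Y)).trace := by
    calc (X ^ (k - 1) * (Y * X)).trace = ((X ^ (k - 1) * Y) * X).trace := by rw [mul_assoc]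
      _ = (X * (X ^ (k - 1) * Y)).trace := by rw [Matrix.trace_mul_comm]
      _ = ((X * X ^ (k - 1)) * Y).trace := by rw [mul_assoc]
      _ = ((X ^ (k - 1) * X) * Y).trace := by rw [(Commute.self_pow X (k-1)).eq]
      _ = (X ^ (k - 1) * (X * Y)).trace := by rw [mul_assoc]
  rw [h1, mul_sub, Matrix.trace_sub, h2, sub_self]

open Finset in
lemma aux_S_succ {ι : Type*} [Fintype ι] [DecidableEq ι] (X X' : Matrix ι ι ℝ) (k : ℕ) :
    (∑ i ∈ Finset.range k, X ^ i * X' * X ^ (k - 1 - i)) * X + X ^ k * X'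
      = ∑ i ∈ Finset.range (k + 1), X ^ i * X' * X ^ (k - i) := by
  rw [Finset.sum_range_succ, Finset.sum_mul]
  congr 1
  · refine Finset.sum_congr rfl fun i hi => ?_
    have hik : i < k := Finset.mem_range.mp hi
    rw [mul_assoc, ← pow_succ]
    congr 2
    omega
  · simp

/-- If `u` is a generalized conical spiral of the Euler field `F(x) = [x, A⁻¹x]`
with ratio `r ≠ 1` (`u s = r • u 0`, `r > 0`), then `K(u t, A⁻¹(u t)) = 0` for all `t`
and `ad (u t)` is nilpotent for all `t` in the domain. -/
theorem stmt12 {L : Type*} [LieRing L] [LieAlgebra ℝ L] [Module.Finite ℝ L]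
    [LieAlgebra.IsSemisimple ℝ L]
    (A : L ≃ₗ[ℝ] L)
    (hAsymm : ∀ x y : L, killingForm ℝ L (A x) y = killingForm ℝ L x (A y))
    (I : Set ℝ) (hI : I.OrdConnected)
    (u : ℝ → L)
    (hu : ∀ (f : L →ₗ[ℝ] ℝ), ∀ t ∈ I,
      HasDerivAt (fun τ => f (u τ)) (f ⁅u t, A.symm (u t)⁆) t)
    (s : ℝ) (hs : s ∈ I) (h0 : (0 : ℝ) ∈ I)
    (r : ℝ) (hr : 0 < r) (hr1 : r ≠ 1)
    (hGCS : u s = r • u 0) :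
    ∀ t ∈ I, killingForm ℝ L (u t) (A.symm (u t)) = 0 ∧
      IsNilpotent (LieAlgebra.ad ℝ L (u t)) := by
  classical
  have hA' : ∀ a c : L, killingForm ℝ L a (A.symm c) = killingForm ℝ L (A.symm a) c := by
    intro a c
    conv_lhs => rw [← A.apply_symm_apply a]
    rw [hAsymm, A.apply_symm_apply]
  set ι := Module.Free.ChooseBasisIndex ℝ L with hι
  letI : DecidableEq ι := Classical.decEq ι
  letI : LieRing (Module.End ℝ L) := LieRing.ofAssociativeRing
  set b : Module.Basis ι ℝ L := Module.Free.chooseBasis ℝ L with hb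
  set G : L →ₗ[ℝ] Matrix ι ι ℝ :=
    (LinearMap.toMatrixAlgEquiv b).toLinearMap ∘ₗ (LieAlgebra.ad ℝ L : L →ₗ⁅ℝ⁆ _).toLinearMap
    with hG
  have hGapp : ∀ x : L, G x = LinearMap.toMatrixAlgEquiv b (LieAlgebra.ad ℝ L x) := fun _ => rfl
  have hGlie : ∀ x y : L, G ⁅x, y⁆ = G x * G y - G y * G x := by
    intro x y
    rw [hGapp, hGapp, hGapp, LieHom.map_lie, Ring.lie_def, map_sub, map_mul, map_mul]
  have hGtr : ∀ x y : L, (G x * G y).trace = killingForm ℝ L x y := by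
    intro x y
    rw [hGapp, hGapp, ← map_mul]
    have h1 : (LinearMap.toMatrixAlgEquiv b) (LieAlgebra.ad ℝ L x * LieAlgebra.ad ℝ L y)
        = LinearMap.toMatrix b b (LieAlgebra.ad ℝ L x ∘ₗ LieAlgebra.ad ℝ L y) := rfl
    rw [h1, ← LinearMap.trace_eq_matrix_trace ℝ b, killingForm_apply_apply]
  set v : ℝ → L := fun τ => A.symm (u τ) with hv
  set w : ℝ → L := fun τ => ⁅u τ, v τ⁆ with hw
  -- differentiating linear images of the curve
  have hder : ∀ (G' : L →ₗ[ℝ] Matrix ι ι ℝ) (t : ℝ), t ∈ I →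
      HasDerivAt (fun τ => G' (u τ)) (G' (w t)) t := by
    intro G' t ht
    have hc : HasDerivAt (fun τ => b.equivFun (u τ)) (b.equivFun (w t)) t := by
      rw [hasDerivAt_pi]
      intro i
      exact hu ((LinearMap.proj i) ∘ₗ (b.equivFun : L ≃ₗ[ℝ] (ι → ℝ)).toLinearMap) t ht
    have hT := ((G' ∘ₗ (b.equivFun.symm : (ι → ℝ) ≃ₗ[ℝ] L).toLinearMap
      ).toContinuousLinearMap).hasFDerivAt.comp_hasDerivAt t hc
    simp only [LinearMap.coe_toContinuousLinearMap', Function.comp_def, LinearMap.coe_comp,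
      LinearEquiv.coe_coe, Function.comp_apply, LinearEquiv.symm_apply_apply] at hT
    exact hT.congr_deriv (by show G' (b.equivFun.symm (b.equivFun (w t))) = G' (w t); simp)
  set Gv : L →ₗ[ℝ] Matrix ι ι ℝ := G ∘ₗ (A.symm : L ≃ₗ[ℝ] L).toLinearMap with hGv
  have hGvapp : ∀ x : L, Gv x = G (A.symm x) := fun _ => rfl
  -- constancy of first integrals
  have hconst : ∀ (g : ℝ → ℝ), (∀ τ ∈ I, HasDerivAt g 0 τ) →
      ∀ t1, t1 ∈ I → ∀ t2, t2 ∈ I → g t1 = g t2 := by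
    have key : ∀ (g : ℝ → ℝ), (∀ τ ∈ I, HasDerivAt g 0 τ) →
        ∀ t1, t1 ∈ I → ∀ t2, t2 ∈ I → t1 ≤ t2 → g t2 = g t1 := by
      intro g hg t1 h1 t2 h2 h12
      have hsub : Set.Icc t1 t2 ⊆ I := hI.out h1 h2
      exact constant_of_has_deriv_right_zero
        (fun x hx => ((hg x (hsub hx)).continuousAt).continuousWithinAt)
        (fun x hx => ((hg x (hsub (Set.Ico_subset_Icc_self hx))).hasDerivWithinAt))
        t2 (Set.right_mem_Icc.mpr h12)
    intro g hg t1 h1 t2 h2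
    rcases le_total t1 t2 with h | h
    · exact (key g hg t1 h1 t2 h2 h).symm
    · exact key g hg t2 h2 t1 h1 h
  have hrpow : ∀ k : ℕ, k ≠ 0 → r ^ k ≠ 1 := by
    intro k hk
    rcases lt_trichotomy r 1 with hlt | heq | hgt
    · exact ne_of_lt (pow_lt_one₀ (le_of_lt hr) hlt hk)
    · exact absurd heq hr1
    · exact ne_of_gt (one_lt_pow₀ hgt hk)
  -- the Killing integral
  set Kf : ℝ → ℝ := fun τ => (G (u τ) * Gv (u τ)).trace with hKf
  have hKd : ∀ t ∈ I, HasDerivAt Kf 0 t := by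
    intro t ht
    have h1 := (hder G t ht).mul (hder Gv t ht)
    have h2 := ((Matrix.traceLinearMap ι ℝ ℝ
      ).toContinuousLinearMap).hasFDerivAt.comp_hasDerivAt t h1
    have hval : (Matrix.traceLinearMap ι ℝ ℝ).toContinuousLinearMap
        (G (w t) * Gv (u t) + G (u t) * Gv (w t)) = 0 := by
      have e1 : (G (w t) * Gv (u t)).trace = killingForm ℝ L (w t) (v t) := by
        rw [hGvapp]; exact hGtr _ _
      have e2 : (G (u t) * Gv (w t)).trace = killingForm ℝ L (v t) (w t) := by
        rw [hGvapp, hGtr]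
        exact hA' (u t) (w t)
      have e3 : killingForm ℝ L (w t) (v t) = 0 := by
        rw [hw]
        rw [LieModule.traceForm_apply_lie_apply]
        simp
      have e4 : killingForm ℝ L (v t) (w t) = 0 := by
        rw [LieModule.traceForm_comm, e3]
      show (G (w t) * Gv (u t) + G (u t) * Gv (w t)).trace = 0
      rw [Matrix.trace_add, e1, e2, e3, e4, add_zero]
    exact h2.congr_deriv hval
  have hKs : Kf s = (r * r) * Kf 0 := by
    rw [hKf]
    simp only [hGCS, map_smul]
    rw [smul_mul_assoc, mul_smul_comm, smul_smul, Matrix.trace_smul]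
    simp [smul_eq_mul]
  have hK0 : Kf 0 = 0 := by
    have hc := hconst Kf hKd s hs 0 h0
    have hr2 : r * r ≠ 1 := by
      have := hrpow 2 (by norm_num)
      rwa [pow_two] at this
    have h3 : (r * r - 1) * Kf 0 = 0 := by rw [sub_mul, one_mul, ← hKs, hc]; ring
    rcases mul_eq_zero.mp h3 with h4 | h4
    · exact absurd (by linarith : r * r = 1) hr2
    · exact h4
  have hKt : ∀ t ∈ I, Kf t = 0 := fun t ht => (hconst Kf hKd t ht 0 h0).trans hK0
  -- the trace power integrals
  have hpowd : ∀ (k : ℕ) (t : ℝ), t ∈ I → HasDerivAt (fun τ => (G (u τ)) ^ k)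
      (∑ i ∈ Finset.range k, (G (u t)) ^ i * G (w t) * (G (u t)) ^ (k - 1 - i)) t := by
    intro k
    induction k with
    | zero =>
        intro t ht
        simp only [pow_zero, Finset.sum_range_zero]; exact hasDerivAt_const t _
    | succ k ih =>
        intro t ht
        have h1 := (ih t ht).mul (hder G t ht)
        have h2 : HasDerivAt (fun τ => (G (u τ)) ^ (k + 1))
            ((∑ i ∈ Finset.range k, (G (u t)) ^ i * G (w t) * (G (u t)) ^ (k - 1 - i)) * G (u t)
              + (G (u t)) ^ k * G (w t)) t := by
          simp only [pow_succ]; exact h1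
        have h3 := aux_S_succ (G (u t)) (G (w t)) k
        rw [h3] at h2
        exact h2
  have htrd : ∀ (k : ℕ) (t : ℝ), t ∈ I →
      HasDerivAt (fun τ => ((G (u τ)) ^ k).trace) 0 t := by
    intro k t ht
    have h1 := ((Matrix.traceLinearMap ι ℝ ℝ
      ).toContinuousLinearMap).hasFDerivAt.comp_hasDerivAt t (hpowd k t ht)
    have hval : (Matrix.traceLinearMap ι ℝ ℝ).toContinuousLinearMap
        (∑ i ∈ Finset.range k, (G (u t)) ^ i * G (w t) * (G (u t)) ^ (k - 1 - i)) = 0 := by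
      have hwm : G (w t) = G (u t) * G (v t) - G (v t) * G (u t) := by
        rw [hw, hGlie]
      show Matrix.trace _ = 0
      rw [hwm]
      exact aux_S_trace (G (u t)) (G (v t)) k
    exact h1.congr_deriv hval
  have htr0 : ∀ (k : ℕ), k ≠ 0 → ∀ t ∈ I, ((G (u t)) ^ k).trace = 0 := by
    intro k hk
    have hscale : ((G (u s)) ^ k).trace = r ^ k * ((G (u 0)) ^ k).trace := by
      rw [hGCS, map_smul, smul_pow, Matrix.trace_smul, smul_eq_mul]
    have hzero : ((G (u 0)) ^ k).trace = 0 := by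
      have hc : ((G (u s)) ^ k).trace = ((G (u 0)) ^ k).trace :=
        hconst (fun τ => ((G (u τ)) ^ k).trace) (htrd k) s hs 0 h0
      have h3 : (r ^ k - 1) * ((G (u 0)) ^ k).trace = 0 := by
        rw [sub_mul, one_mul, ← hscale, hc]; ring
      rcases mul_eq_zero.mp h3 with h4 | h4
      · exact absurd (by linarith : r ^ k = 1) (hrpow k hk)
      · exact h4
    intro t ht
    exact (hconst (fun τ => ((G (u τ)) ^ k).trace) (htrd k) t ht 0 h0).trans hzero
  -- conclusion
  intro t ht
  constructor
  · have h5 : (G (u t) * Gv (u t)).trace = 0 := hKt t ht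
    rw [hGvapp] at h5
    rw [← hGtr (u t) (v t)]
    exact h5
  · have hnil : IsNilpotent (G (u t)) :=
      aux_nilpotent_real_matrix (G (u t)) (fun k hk => htr0 k hk t ht)
    rw [hGapp] at hnil
    have := hnil.map (LinearMap.toMatrixAlgEquiv b).symm
    simpa using this
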